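/- arXiv:2305.13841 — 2 statements merged into one kernel-verified Lean document; each statement's English description precedes it below -/
import Mathlib

section
/- Let A, B be self-adjoint ℂ-linear endomorphisms of EuclideanSpace ℂ (Fin n), let v ∈ ℂ^n, λ, μ ∈ ℝ, and let k ∈ Fin n be an index with Re(v k) ≠ 0. If A v − λ • B v = μ • (Complex.I • e_k), where e_k is the k-th standard basis vector, then μ = 0, and consequently v satisfies the generalized eigenvector equation A v = λ • B v. In other words, a solution of the phase-pinned first-order optimality conditions (with the imaginary part b_k of the k-th phase constrained) is automatically a generalized eigenvector, with vanishing Lagrange multiplier μ. -/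
open Complex

/-- Phase-pinned optimality conditions: for self-adjoint `A, B` on `EuclideanSpace ℂ (Fin n)`,
if `A v − λ•B v = μ • (ι • e_k)` where `e_k` is the `k`-th standard basis vector and the pinned
coordinate satisfies `Re(v k) ≠ 0`, then the Lagrange multiplier `μ` vanishes and `v` is a
generalized eigenvector: `A v = λ • B v`. -/
theorem pinned_multiplier_vanishes {n : ℕ}
    (A B : EuclideanSpace ℂ (Fin n) →ₗ[ℂ] EuclideanSpace ℂ (Fin n))
    (hA : ∀ x y : EuclideanSpace ℂ (Fin n), (inner ℂ (A x) y : ℂ) = inner ℂ x (A y))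
    (hB : ∀ x y : EuclideanSpace ℂ (Fin n), (inner ℂ (B x) y : ℂ) = inner ℂ x (B y))
    (v : EuclideanSpace ℂ (Fin n)) (lam mu : ℝ) (k : Fin n)
    (hk : (v k).re ≠ 0)
    (h : A v - (lam : ℂ) • B v = (mu : ℂ) • (Complex.I • EuclideanSpace.single k (1 : ℂ))) :
    mu = 0 ∧ A v = (lam : ℂ) • B v := by
  have hAv : ((inner ℂ v (A v) : ℂ)).im = 0 := by
    rw [← Complex.conj_eq_iff_im, inner_conj_symm, hA]
  have hBv : ((inner ℂ v (B v) : ℂ)).im = 0 := by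
    rw [← Complex.conj_eq_iff_im, inner_conj_symm, hB]
  have hin := congrArg (fun w => (inner ℂ v w : ℂ)) h
  simp only [inner_sub_right, inner_smul_right, EuclideanSpace.inner_single_right] at hin
  set a : ℂ := inner ℂ v (A v) with ha
  set b : ℂ := inner ℂ v (B v) with hb
  have him := congrArg Complex.im hin
  simp only [Complex.sub_im, Complex.mul_im, Complex.mul_re, Complex.ofReal_re,
    Complex.ofReal_im, Complex.I_re, Complex.I_im, Complex.one_re, Complex.one_im,
    Complex.conj_re, Complex.conj_im, hAv, hBv] at him
  have hmu : mu = 0 := by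
    have : mu * (v k).re = 0 := by nlinarith [him]
    rcases mul_eq_zero.mp this with h' | h'
    · exact h'
    · exact absurd h' hk
  refine ⟨hmu, ?_⟩
  have := h
  rw [hmu] at this
  simpa [sub_eq_zero] using this
end

section
/- Let A, B ∈ Matrix (Fin m) (Fin m) ℝ be symmetric matrices, λ ∈ ℝ, and let v, u ∈ ℝ^m satisfy A *ᵥ v = λ • (B *ᵥ v), A *ᵥ u = λ • (B *ᵥ u), v ⬝ᵥ (B *ᵥ v) ≠ 0, and suppose the kernel of (A − λ•B) is contained in the real span of {v, u}. Let e ∈ ℝ^m satisfy e ⬝ᵥ v = 0 and e ⬝ᵥ u ≠ 0. Then the linear map ℝ^m × ℝ × ℝ → ℝ^m × ℝ × ℝ given by (x, y, z) ↦ ( (A − λ•B) *ᵥ x − y • (B *ᵥ v) + z • e, −(B *ᵥ v) ⬝ᵥ x, e ⬝ᵥ x ) is bijective; i.e., the phase-pinned augmented saddle-point matrix [[A−λB, −Bv, e],[−(Bv)ᵀ, 0, 0],[eᵀ, 0, 0]] is non-singular. -/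
open Matrix

/-- Non-singularity of the phase-pinned augmented saddle-point system (Eq. (16)):
with symmetric `A, B`, generalized eigenvectors `v, u` for `λ` spanning (at least) the kernel
of `A − λB`, `v ⬝ (B v) ≠ 0`, and a pinning vector `e` with `e ⬝ v = 0` and `e ⬝ u ≠ 0`,
the map `(x, y, z) ↦ ((A − λB) x − y (B v) + z e, −(B v) ⬝ x, e ⬝ x)` is bijective. -/
theorem pinned_saddle_point_nonsingular {m : ℕ}
    (A B : Matrix (Fin m) (Fin m) ℝ) (hA : A.IsSymm) (hB : B.IsSymm)
    (lam : ℝ) (v u e : Fin m → ℝ)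
    (hv : A *ᵥ v = lam • (B *ᵥ v)) (hu : A *ᵥ u = lam • (B *ᵥ u))
    (hvBv : v ⬝ᵥ (B *ᵥ v) ≠ 0)
    (hker : ∀ x : Fin m → ℝ, (A - lam • B) *ᵥ x = 0 →
      x ∈ Submodule.span ℝ ({v, u} : Set (Fin m → ℝ)))
    (hev : e ⬝ᵥ v = 0) (heu : e ⬝ᵥ u ≠ 0) :
    Function.Bijective (fun p : (Fin m → ℝ) × ℝ × ℝ =>
      (((A - lam • B) *ᵥ p.1 - p.2.1 • (B *ᵥ v) + p.2.2 • e,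
        -((B *ᵥ v) ⬝ᵥ p.1), e ⬝ᵥ p.1) : (Fin m → ℝ) × ℝ × ℝ)) := by
  classical
  set M := A - lam • B with hM
  have hMsymm : Mᵀ = M := by
    rw [hM, Matrix.transpose_sub, Matrix.transpose_smul, hA.eq, hB.eq]
  have hMv : M *ᵥ v = 0 := by
    rw [hM, Matrix.sub_mulVec, Matrix.smul_mulVec, hv, sub_self]
  have hMu : M *ᵥ u = 0 := by
    rw [hM, Matrix.sub_mulVec, Matrix.smul_mulVec, hu, sub_self]
  have hdotM : ∀ w x : Fin m → ℝ, w ⬝ᵥ (M *ᵥ x) = (M *ᵥ w) ⬝ᵥ x := by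
    intro w x
    rw [Matrix.dotProduct_mulVec, ← Matrix.vecMul_transpose, hMsymm]
  let f : ((Fin m → ℝ) × ℝ × ℝ) →ₗ[ℝ] ((Fin m → ℝ) × ℝ × ℝ) :=
  { toFun := fun p => (M *ᵥ p.1 - p.2.1 • (B *ᵥ v) + p.2.2 • e,
      -((B *ᵥ v) ⬝ᵥ p.1), e ⬝ᵥ p.1)
    map_add' := by
      intro p q
      refine Prod.ext ?_ (Prod.ext ?_ ?_) <;>
        simp [Matrix.mulVec_add, dotProduct_add, add_smul] <;> module
    map_smul' := by
      intro c p
      refine Prod.ext ?_ (Prod.ext ?_ ?_) <;>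
        simp [Matrix.mulVec_smul, dotProduct_smul, smul_smul, smul_sub,
          smul_add, mul_comm] }
  have hinj : Function.Injective f := by
    rw [← LinearMap.ker_eq_bot, LinearMap.ker_eq_bot']
    rintro ⟨x, y, z⟩ hp
    have h1 : M *ᵥ x - y • (B *ᵥ v) + z • e = 0 := congrArg Prod.fst hp
    have h2 : -((B *ᵥ v) ⬝ᵥ x) = 0 := congrArg (fun q => q.2.1) hp
    have h3 : e ⬝ᵥ x = 0 := congrArg (fun q => q.2.2) hp
    -- dot h1 with v
    have hvdot : v ⬝ᵥ (M *ᵥ x - y • (B *ᵥ v) + z • e) = 0 := by rw [h1, dotProduct_zero]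
    have hv1 : -(y * (v ⬝ᵥ (B *ᵥ v))) = 0 := by
      have := hvdot
      rw [dotProduct_add, dotProduct_sub, hdotM, hMv,
        zero_dotProduct, dotProduct_smul, dotProduct_smul,
        dotProduct_comm v e, hev] at this
      simpa using this
    have hy : y = 0 := by
      rcases mul_eq_zero.mp (neg_eq_zero.mp hv1) with h | h
      · exact h
      · exact absurd h hvBv
    have hudot : u ⬝ᵥ (M *ᵥ x - y • (B *ᵥ v) + z • e) = 0 := by rw [h1, dotProduct_zero]
    have hz : z = 0 := by
      rw [dotProduct_add, dotProduct_sub, hdotM, hMu,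
        zero_dotProduct, dotProduct_smul, dotProduct_smul,
        dotProduct_comm u e, hy] at hudot
      simp at hudot
      rcases hudot with h | h
      · exact h
      · exact absurd h heu
    have hMx : M *ᵥ x = 0 := by
      have := h1
      rw [hy, hz] at this
      simpa using this
    obtain ⟨a, b, hab⟩ := Submodule.mem_span_pair.mp (hker x hMx)
    have hbx : b = 0 := by
      have : e ⬝ᵥ (a • v + b • u) = 0 := by rw [hab]; exact h3
      rw [dotProduct_add, dotProduct_smul, dotProduct_smul,
        hev] at this
      simp at this
      rcases this with h | h
      · exact h
      · exact absurd h heu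
    have hax : a = 0 := by
      have h2' : (B *ᵥ v) ⬝ᵥ x = 0 := by simpa using neg_eq_zero.mp h2
      have : (B *ᵥ v) ⬝ᵥ (a • v + b • u) = 0 := by rw [hab]; exact h2'
      rw [hbx] at this
      simp [dotProduct_smul] at this
      rcases this with h | h
      · exact h
      · exact absurd (by rwa [dotProduct_comm] at h) hvBv
    have hx : x = 0 := by rw [← hab, hax, hbx]; simp
    simp [Prod.ext_iff, hx, hy, hz]
  have hsurj : Function.Surjective f :=
    (LinearMap.injective_iff_surjective).mp hinj
  exact ⟨hinj, hsurj⟩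
end
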